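/- Let C, Z_1, ..., Z_n ∈ B(H) satisfy ‖Ch‖² + ∑_{i=1}^n ‖Z_i h‖² ≤ ‖h‖² for all h ∈ H. Then for every k ≥ 0, ∑_{|α|=k} ‖C Z_α h‖² ≤ ∑_{|α|=k} ‖Z_α h‖² − ∑_{|β|=k+1} ‖Z_β h‖², where the sums are over words α of length k (resp. k+1) in the free semigroup on n generators and Z_α denotes the corresponding product. -/
import Mathlib


/-- `Z_α := Z_{i_1} ⋯ Z_{i_k}` for a word `α = g_{i_1} ⋯ g_{i_k}` in the free
semigroup on `n` generators (`Z_∅ = I`). -/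
noncomputable def wordProd {H : Type*} [NormedAddCommGroup H] [NormedSpace ℂ H]
    {n : ℕ} (Z : Fin n → H →L[ℂ] H) (α : List (Fin n)) : H →L[ℂ] H :=
  (α.map Z).prod

lemma wordProd_cons {H : Type*} [NormedAddCommGroup H] [NormedSpace ℂ H]
    {n k : ℕ} (Z : Fin n → H →L[ℂ] H) (i : Fin n) (α : Fin k → Fin n) :
    wordProd Z (List.ofFn (Fin.cons i α)) = Z i * wordProd Z (List.ofFn α) := by
  simp [wordProd, List.ofFn_succ, Fin.cons_zero, Fin.cons_succ]

/-- If `‖Ch‖² + ∑ ‖Z_i h‖² ≤ ‖h‖²` for all `h`, then for every `k ≥ 0`,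
`∑_{|α|=k} ‖C Z_α h‖² ≤ ∑_{|α|=k} ‖Z_α h‖² − ∑_{|β|=k+1} ‖Z_β h‖²`. -/
theorem wordProd_contraction_step
    {H : Type*} [NormedAddCommGroup H] [InnerProductSpace ℂ H]
    {n : ℕ} (C : H →L[ℂ] H) (Z : Fin n → H →L[ℂ] H)
    (hc : ∀ h : H, ‖C h‖ ^ 2 + ∑ i, ‖Z i h‖ ^ 2 ≤ ‖h‖ ^ 2)
    (k : ℕ) (h : H) :
    ∑ α : Fin k → Fin n, ‖C (wordProd Z (List.ofFn α) h)‖ ^ 2 ≤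
      ∑ α : Fin k → Fin n, ‖wordProd Z (List.ofFn α) h‖ ^ 2 -
        ∑ β : Fin (k + 1) → Fin n, ‖wordProd Z (List.ofFn β) h‖ ^ 2 := by
  have key : ∑ β : Fin (k + 1) → Fin n, ‖wordProd Z (List.ofFn β) h‖ ^ 2 =
      ∑ α : Fin k → Fin n, ∑ i : Fin n, ‖Z i (wordProd Z (List.ofFn α) h)‖ ^ 2 := by
    calc ∑ β : Fin (k + 1) → Fin n, ‖wordProd Z (List.ofFn β) h‖ ^ 2
        = ∑ p : Fin n × (Fin k → Fin n), ‖Z p.1 (wordProd Z (List.ofFn p.2) h)‖ ^ 2 := by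
          refine Fintype.sum_equiv (Fin.consEquiv fun _ : Fin (k + 1) => Fin n).symm _ _ ?_
          intro β
          simp [Fin.consEquiv, wordProd, List.ofFn_succ, Fin.tail_def,
            ContinuousLinearMap.mul_apply]
      _ = ∑ i : Fin n, ∑ α : Fin k → Fin n, ‖Z i (wordProd Z (List.ofFn α) h)‖ ^ 2 :=
          by rw [Fintype.sum_prod_type]
      _ = ∑ α : Fin k → Fin n, ∑ i : Fin n, ‖Z i (wordProd Z (List.ofFn α) h)‖ ^ 2 :=
          Finset.sum_comm
  rw [key, ← Finset.sum_sub_distrib]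
  refine Finset.sum_le_sum fun α _ => ?_
  have := hc (wordProd Z (List.ofFn α) h)
  linarith
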